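/- arXiv:2502.07214 — 3 statements merged into one kernel-verified Lean document; each statement's English description precedes it below -/
import Mathlib

section
/- All table entries are Pareto optimal: for every iteration ℓ : ℕ and every vertex v : V, if c ∈ D ℓ v then no walk from s to v with at most ℓ edges has cost dominating c. -/
open scoped NNReal

/-- A walk from `s` to `t`: a nonempty list of vertices starting at `s`,
ending at `t`, with `E u v` for every pair of consecutive vertices. -/
def IsWalk {V : Type*} (E : V → V → Prop) (s t : V) (l : List V) : Prop :=
  l ≠ [] ∧ l.head? = some s ∧ l.getLast? = some t ∧ l.Chain' E

/-- The multi-cost of a walk: componentwise sum of edge weights over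
consecutive pairs of vertices (a walk with no edges has cost `0`). -/
def walkCost {V : Type*} {k : ℕ} (w : V → V → Fin k → ℝ≥0) (l : List V) :
    Fin k → ℝ≥0 :=
  ((l.zip l.tail).map fun p => w p.1 p.2).sum

/-- The Pareto front: minimal elements of `S` w.r.t. the product order. -/
def paretoFront {k : ℕ} (S : Set (Fin k → ℝ≥0)) : Set (Fin k → ℝ≥0) :=
  {m | m ∈ S ∧ ¬ ∃ c ∈ S, c < m}

lemma walkCost_cons_cons {V : Type*} {k : ℕ} (w : V → V → Fin k → ℝ≥0)
    (a b : V) (l : List V) :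
    walkCost w (a :: b :: l) = w a b + walkCost w (b :: l) := by
  simp [walkCost]

lemma walkCost_concat {V : Type*} {k : ℕ} (w : V → V → Fin k → ℝ≥0) :
    ∀ (l : List V) (u v : V), l.getLast? = some u →
    walkCost w (l ++ [v]) = walkCost w l + w u v := by
  intro l
  induction l with
  | nil => intro u v h; simp at h
  | cons a t ih =>
    intro u v h
    cases t with
    | nil =>
      simp only [List.getLast?_singleton, Option.some.injEq] at h
      subst h
      simp [walkCost]
    | cons b t' =>
      rw [List.getLast?_cons_cons] at h
      have ih' := ih u v h
      simp only [List.cons_append] at ih' ⊢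
      rw [walkCost_cons_cons, ih', walkCost_cons_cons]
      abel

lemma paretoFront_exists_le {k : ℕ} {S : Set (Fin k → ℝ≥0)} (hS : S.Finite)
    {x : Fin k → ℝ≥0} (hx : x ∈ S) : ∃ m ∈ paretoFront S, m ≤ x := by
  have hT : {y ∈ S | y ≤ x}.Finite := hS.subset (fun y hy => hy.1)
  obtain ⟨m, hm, hmin⟩ := Set.Finite.exists_minimalFor id _ hT ⟨x, hx, le_refl x⟩
  refine ⟨m, ⟨hm.1, ?_⟩, hm.2⟩
  rintro ⟨c, hc, hlt⟩
  exact absurd (hmin ⟨hc, hlt.le.trans hm.2⟩ hlt.le) (not_le_of_gt hlt)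

/-- every table entry is Pareto optimal: no walk from `s` to
`v` with at most `ℓ` edges has cost dominating an element of `D ℓ v`. -/
theorem paretoTable_entries_optimal {V : Type*} [Fintype V]
    (E : V → V → Prop) [DecidableRel E] {k : ℕ} (w : V → V → Fin k → ℝ≥0)
    (s : V) (D : ℕ → V → Set (Fin k → ℝ≥0))
    (hD0s : D 0 s = {0})
    (hD0 : ∀ v : V, v ≠ s → D 0 v = ∅)
    (hDstep : ∀ (ℓ : ℕ) (v : V), D (ℓ + 1) v =
      paretoFront (D ℓ v ∪ {x | ∃ u : V, E u v ∧ ∃ c ∈ D ℓ u, x = c + w u v})) :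
    ∀ (ℓ : ℕ) (v : V), ∀ c ∈ D ℓ v,
      ¬ ∃ Q : List V, IsWalk E s v Q ∧ Q.length - 1 ≤ ℓ ∧ walkCost w Q < c := by
  -- finiteness of the tables
  have hfin : ∀ ℓ v, (D ℓ v).Finite := by
    intro ℓ
    induction ℓ with
    | zero =>
      intro v
      by_cases hv : v = s
      · subst hv; rw [hD0s]; exact Set.finite_singleton 0
      · rw [hD0 v hv]; exact Set.finite_empty
    | succ ℓ ih =>
      intro v
      rw [hDstep]
      apply Set.Finite.subset (s := D ℓ v ∪ ⋃ u : V, (· + w u v) '' D ℓ u)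
      · exact ((ih v).union (Set.finite_iUnion fun u => (ih u).image _))
      · rintro x ⟨hx, -⟩
        rcases hx with hx | ⟨u, _, c, hc, rfl⟩
        · exact Or.inl hx
        · exact Or.inr (Set.mem_iUnion.2 ⟨u, c, hc, rfl⟩)
  -- antichain property
  have hanti : ∀ ℓ v, ∀ c ∈ D ℓ v, ∀ d ∈ D ℓ v, ¬ d < c := by
    intro ℓ v c hc d hd hlt
    cases ℓ with
    | zero =>
      by_cases hv : v = s
      · subst hv; rw [hD0s] at hc hd
        simp only [Set.mem_singleton_iff] at hc hd
        subst hc; subst hd; exact lt_irrefl _ hlt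
      · rw [hD0 v hv] at hc; exact hc
    | succ ℓ =>
      rw [hDstep] at hc hd
      exact hc.2 ⟨d, hd.1, hlt⟩
  -- completeness: every walk is weakly dominated by some table entry
  have hcomp : ∀ ℓ v (Q : List V), IsWalk E s v Q → Q.length - 1 ≤ ℓ →
      ∃ d ∈ D ℓ v, d ≤ walkCost w Q := by
    intro ℓ
    induction ℓ with
    | zero =>
      intro v Q hQ hlen
      obtain ⟨hne, hhead, hlast, -⟩ := hQ
      have h1 : Q.length = 1 := by
        have := List.length_pos_iff.2 hne
        omega
      obtain ⟨a, rfl⟩ := List.length_eq_one_iff.mp h1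
      simp only [List.head?_cons, Option.some.injEq] at hhead
      simp only [List.getLast?_singleton, Option.some.injEq] at hlast
      subst hhead; subst hlast
      rw [hD0s]
      exact ⟨0, rfl, by simp [walkCost]⟩
    | succ ℓ ih =>
      intro v Q hQ hlen
      by_cases hsh : Q.length - 1 ≤ ℓ
      · obtain ⟨d, hd, hdle⟩ := ih v Q hQ hsh
        have hdS : d ∈ D ℓ v ∪ {x | ∃ u : V, E u v ∧ ∃ c ∈ D ℓ u, x = c + w u v} :=
          Or.inl hd
        have hSfin : (D ℓ v ∪ {x | ∃ u : V, E u v ∧ ∃ c ∈ D ℓ u, x = c + w u v}).Finite := by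
          have := hfin (ℓ + 1) v
          rw [hDstep] at this
          apply Set.Finite.subset (s := D ℓ v ∪ ⋃ u : V, (· + w u v) '' D ℓ u)
          · exact ((hfin ℓ v).union (Set.finite_iUnion fun u => (hfin ℓ u).image _))
          · rintro x (hx | ⟨u, _, c, hc, rfl⟩)
            · exact Or.inl hx
            · exact Or.inr (Set.mem_iUnion.2 ⟨u, c, hc, rfl⟩)
        obtain ⟨m, hm, hmle⟩ := paretoFront_exists_le hSfin hdS
        rw [← hDstep] at hm
        exact ⟨m, hm, hmle.trans hdle⟩
      · -- exactly ℓ + 2 vertices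
        obtain ⟨hne, hhead, hlast, hchain⟩ := hQ
        have hlen2 : 2 ≤ Q.length := by
          have := List.length_pos_iff.2 hne
          omega
        obtain (rfl | ⟨R, x, rfl⟩) := Q.eq_nil_or_concat
        · simp at hlen2
        simp only [List.concat_eq_append] at hlen hsh hne hhead hlast hchain hlen2 ⊢
        have hRne : R ≠ [] := by
          rintro rfl; simp at hlen2
        have hx : x = v := by
          rw [List.getLast?_concat] at hlast
          simpa using hlast
        subst hx
        obtain ⟨u, hu⟩ : ∃ u, R.getLast? = some u :=
          ⟨_, List.getLast?_eq_getLast hRne⟩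
        have hchain' := List.isChain_append.mp hchain
        have hEuv : E u x :=
          hchain'.2.2 u (Option.mem_def.mpr hu) x (Option.mem_def.mpr rfl)
        have hRwalk : IsWalk E s u R := by
          refine ⟨hRne, ?_, hu, hchain'.1⟩
          rwa [List.head?_append_of_ne_nil _ hRne] at hhead
        have hRlen : R.length - 1 ≤ ℓ := by
          have : (R ++ [x]).length = R.length + 1 := by simp
          omega
        obtain ⟨d, hd, hdle⟩ := ih u R hRwalk hRlen
        have hxS : d + w u x ∈ D ℓ x ∪ {y | ∃ u : V, E u x ∧ ∃ c ∈ D ℓ u, y = c + w u x} :=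
          Or.inr ⟨u, hEuv, d, hd, rfl⟩
        have hSfin : (D ℓ x ∪ {y | ∃ u : V, E u x ∧ ∃ c ∈ D ℓ u, y = c + w u x}).Finite := by
          apply Set.Finite.subset (s := D ℓ x ∪ ⋃ u : V, (· + w u x) '' D ℓ u)
          · exact ((hfin ℓ x).union (Set.finite_iUnion fun u => (hfin ℓ u).image _))
          · rintro y (hy | ⟨u, _, c, hc, rfl⟩)
            · exact Or.inl hy
            · exact Or.inr (Set.mem_iUnion.2 ⟨u, c, hc, rfl⟩)
        obtain ⟨m, hm, hmle⟩ := paretoFront_exists_le hSfin hxS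
        rw [← hDstep] at hm
        refine ⟨m, hm, ?_⟩
        rw [walkCost_concat w R u x hu]
        exact hmle.trans (add_le_add_left hdle _)
  -- conclude
  rintro ℓ v c hc ⟨Q, hQ, hlen, hlt⟩
  obtain ⟨d, hd, hdle⟩ := hcomp ℓ v Q hQ hlen
  exact hanti ℓ v c hc d hd (lt_of_le_of_lt hdle hlt)
end

section
/- Hop bound suffices: for all vertices s, t in a finite vertex type V, the set of minimal elements (with respect to the product order on Fin k → ℝ≥0) of the costs of all walks from s to t equals the set of minimal elements of the costs of walks from s to t with at most (card V) − 1 edges. In particular no Pareto optimal multi-cost requires a walk with more than (card V) − 1 edges. -/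
open scoped NNReal

lemma walkCost_append {V : Type*} {k : ℕ} (w : V → V → Fin k → ℝ≥0) :
    ∀ (l1 : List V) (v : V) (l2 : List V),
      walkCost w (l1 ++ v :: l2) = walkCost w (l1 ++ [v]) + walkCost w (v :: l2)
  | [], v, l2 => by simp [walkCost]
  | [a], v, l2 => by
      simp only [List.cons_append, List.nil_append, walkCost_cons_cons]
      simp [walkCost]
  | a :: b :: l1, v, l2 => by
      have := walkCost_append w (b :: l1) v l2
      simp only [List.cons_append] at *
      rw [walkCost_cons_cons, walkCost_cons_cons, this, add_assoc]

lemma exists_dup {V : Type*} : ∀ (l : List V), ¬ l.Nodup →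
    ∃ (a : V) (A B C : List V), l = A ++ a :: (B ++ a :: C)
  | [], h => absurd List.nodup_nil h
  | x :: xs, h => by
      by_cases hx : x ∈ xs
      · obtain ⟨B, C, rfl⟩ := List.append_of_mem hx
        exact ⟨x, [], B, C, rfl⟩
      · have : ¬ xs.Nodup := fun hn => h (List.nodup_cons.2 ⟨hx, hn⟩)
        obtain ⟨a, A, B, C, rfl⟩ := exists_dup xs this
        exact ⟨a, x :: A, B, C, rfl⟩

lemma shorten_walk {V : Type*} [Fintype V] [DecidableEq V] {E : V → V → Prop}
    {k : ℕ} (w : V → V → Fin k → ℝ≥0) {s t : V} :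
    ∀ (n : ℕ) (Q : List V), Q.length ≤ n → IsWalk E s t Q →
      ∃ Q', IsWalk E s t Q' ∧ Q'.length ≤ Fintype.card V ∧
        walkCost w Q' ≤ walkCost w Q := by
  intro n
  induction n with
  | zero =>
      intro Q hQ hW
      exact absurd (List.length_eq_zero_iff.1 (Nat.le_zero.1 hQ)) hW.1
  | succ n ih =>
      intro Q hQ hW
      by_cases hnd : Q.Nodup
      · exact ⟨Q, hW, hnd.length_le_card, le_refl _⟩
      · obtain ⟨a, A, B, C, rfl⟩ := exists_dup Q hnd
        set Q' : List V := A ++ a :: C with hQ'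
        obtain ⟨hne, hhd, hlast, hch⟩ := hW
        have hW' : IsWalk E s t Q' := by
          refine ⟨by simp [hQ'], ?_, ?_, ?_⟩
          · rw [← hhd]
            cases A <;> simp [hQ']
          · rw [← hlast, hQ']
            have h1 : A ++ a :: (B ++ a :: C) = (A ++ a :: B) ++ a :: C := by
              simp
            rw [h1, List.getLast?_append_cons, List.getLast?_append_cons]
          · rw [hQ', List.Chain', List.isChain_append]
            rw [List.Chain', List.isChain_append] at hch
            obtain ⟨hA, hrest, hcond⟩ := hch
            refine ⟨hA, ?_, ?_⟩
            · have hsuf : a :: C <:+ a :: (B ++ a :: C) := by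
                refine ⟨a :: B, by simp⟩
              exact hrest.suffix hsuf
            · intro x hx y hy
              exact hcond x hx y (by simpa using hy)
        have hlen : Q'.length + 1 ≤ (A ++ a :: (B ++ a :: C)).length := by
          simp [hQ']
        obtain ⟨Q'', hW'', hlen'', hcost''⟩ := ih Q' (by omega) hW'
        refine ⟨Q'', hW'', hlen'', le_trans hcost'' ?_⟩
        have hc1 : walkCost w (A ++ a :: (B ++ a :: C)) =
            walkCost w (A ++ [a]) + (walkCost w ((a :: B) ++ [a]) + walkCost w (a :: C)) := by
          rw [walkCost_append]
          congr 1
          have : a :: (B ++ a :: C) = (a :: B) ++ a :: C := by simp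
          rw [this, walkCost_append]
        have hc2 : walkCost w Q' = walkCost w (A ++ [a]) + walkCost w (a :: C) := by
          rw [hQ', walkCost_append]
        rw [hc1, hc2]
        exact add_le_add le_rfl (le_add_self)

/-- hop bound suffices: the Pareto front of the costs of all
walks from `s` to `t` equals the Pareto front of the costs of walks from
`s` to `t` with at most `card V - 1` edges. -/
theorem paretoFront_hop_bound {V : Type*} [Fintype V]
    (E : V → V → Prop) [DecidableRel E] {k : ℕ} (w : V → V → Fin k → ℝ≥0)
    (s t : V) :
    paretoFront {c | ∃ Q : List V, IsWalk E s t Q ∧ walkCost w Q = c} =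
    paretoFront {c | ∃ Q : List V, IsWalk E s t Q ∧
      Q.length - 1 ≤ Fintype.card V - 1 ∧ walkCost w Q = c} := by
  classical
  ext m
  simp only [paretoFront, Set.mem_setOf_eq]
  constructor
  · rintro ⟨⟨Q, hW, rfl⟩, hmin⟩
    obtain ⟨Q', hW', hlen', hcost'⟩ := shorten_walk w Q.length Q le_rfl hW
    have heq : walkCost w Q' = walkCost w Q := by
      by_contra hne
      exact hmin ⟨walkCost w Q', ⟨Q', hW', rfl⟩, lt_of_le_of_ne hcost' hne⟩
    refine ⟨⟨Q', hW', Nat.sub_le_sub_right hlen' 1, heq⟩, ?_⟩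
    rintro ⟨c, ⟨R, hR, -, rfl⟩, hlt⟩
    exact hmin ⟨_, ⟨R, hR, rfl⟩, hlt⟩
  · rintro ⟨⟨Q, hW, hlen, hfc⟩, hmin⟩
    refine ⟨⟨Q, hW, hfc⟩, ?_⟩
    rintro ⟨c, ⟨R, hR, rfl⟩, hlt⟩
    obtain ⟨R', hW', hlen', hcost'⟩ := shorten_walk w R.length R le_rfl hR
    exact hmin ⟨walkCost w R', ⟨R', hW', Nat.sub_le_sub_right hlen' 1, rfl⟩,
      lt_of_le_of_lt hcost' hlt⟩
end

section
/- Monotone growth of reachable Pareto costs: for every vertex v : V and all ℓ ≤ ℓ', every element of D ℓ' v is dominated-or-equalled by no element obtained earlier and, conversely, for every c ∈ D ℓ v there exists c' ∈ D ℓ' v with c' ≤ c componentwise. In particular, the componentwise-minimal cost to reach v never increases as the hop bound ℓ grows. -/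
open scoped NNReal

lemma exists_pareto_le {k : ℕ} {S : Set (Fin k → ℝ≥0)} (hS : S.Finite)
    {c : Fin k → ℝ≥0} (hc : c ∈ S) : ∃ m ∈ paretoFront S, m ≤ c := by
  have hT : {x ∈ S | x ≤ c}.Finite := hS.subset (Set.sep_subset _ _)
  obtain ⟨m, hm, hmin⟩ := hT.toFinset.exists_minimal
    (by simp [Set.Finite.toFinset_nonempty]; exact ⟨c, hc, le_refl c⟩)
  rw [Set.Finite.mem_toFinset] at hm
  refine ⟨m, ⟨hm.1, ?_⟩, hm.2⟩
  rintro ⟨x, hx, hxm⟩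
  exact lt_irrefl x (lt_of_lt_of_le hxm (hmin (y := x) (by show x ∈ hT.toFinset; rw [Set.Finite.mem_toFinset]; exact ⟨hx, hxm.le.trans hm.2⟩) hxm.le))

/-- monotone growth of reachable Pareto costs: for `ℓ ≤ ℓ'`,
no element of `D ℓ' v` is dominated by an element of `D ℓ v`, and every
element of `D ℓ v` is dominated-or-equalled by some element of `D ℓ' v`;
in particular the componentwise-minimal cost to reach `v` never increases
as the hop bound grows. -/
theorem paretoTable_monotone {V : Type*} [Fintype V]
    (E : V → V → Prop) [DecidableRel E] {k : ℕ} (w : V → V → Fin k → ℝ≥0)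
    (s : V) (D : ℕ → V → Set (Fin k → ℝ≥0))
    (hD0s : D 0 s = {0})
    (hD0 : ∀ v : V, v ≠ s → D 0 v = ∅)
    (hDstep : ∀ (ℓ : ℕ) (v : V), D (ℓ + 1) v =
      paretoFront (D ℓ v ∪ {x | ∃ u : V, E u v ∧ ∃ c ∈ D ℓ u, x = c + w u v})) :
    ∀ (ℓ ℓ' : ℕ), ℓ ≤ ℓ' → ∀ v : V,
      (∀ c' ∈ D ℓ' v, ¬ ∃ c ∈ D ℓ v, c < c') ∧
      (∀ c ∈ D ℓ v, ∃ c' ∈ D ℓ' v, c' ≤ c) := by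
  -- finiteness of all tables
  have hfin : ∀ ℓ v, (D ℓ v).Finite := by
    intro ℓ
    induction ℓ with
    | zero =>
      intro v
      by_cases hv : v = s
      · subst hv; rw [hD0s]; exact Set.finite_singleton 0
      · rw [hD0 v hv]; exact Set.finite_empty
    | succ ℓ ih =>
      intro v
      rw [hDstep]
      have h1 : {x | ∃ u : V, E u v ∧ ∃ c ∈ D ℓ u, x = c + w u v}.Finite := by
        have : {x | ∃ u : V, E u v ∧ ∃ c ∈ D ℓ u, x = c + w u v} ⊆
            ⋃ u : V, (fun c => c + w u v) '' D ℓ u := by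
          rintro x ⟨u, _, c, hc, rfl⟩
          exact Set.mem_iUnion.2 ⟨u, ⟨c, hc, rfl⟩⟩
        exact ((Set.finite_iUnion fun u => (ih u).image _).subset this)
      exact (((ih v).union h1).subset fun x hx => hx.1)
  -- one-step domination
  have hstep : ∀ ℓ v, ∀ c ∈ D ℓ v, ∃ c' ∈ D (ℓ + 1) v, c' ≤ c := by
    intro ℓ v c hc
    rw [hDstep]
    have hSfin : (D ℓ v ∪ {x | ∃ u : V, E u v ∧ ∃ c ∈ D ℓ u, x = c + w u v}).Finite := by
      have := hfin (ℓ + 1) v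
      rw [hDstep] at this
      -- redo the finiteness of the union directly
      have h1 : {x | ∃ u : V, E u v ∧ ∃ c ∈ D ℓ u, x = c + w u v}.Finite := by
        have hsub : {x | ∃ u : V, E u v ∧ ∃ c ∈ D ℓ u, x = c + w u v} ⊆
            ⋃ u : V, (fun c => c + w u v) '' D ℓ u := by
          rintro x ⟨u, _, c, hc, rfl⟩
          exact Set.mem_iUnion.2 ⟨u, ⟨c, hc, rfl⟩⟩
        exact ((Set.finite_iUnion fun u => (hfin ℓ u).image _).subset hsub)
      exact (hfin ℓ v).union h1
    exact exists_pareto_le hSfin (Set.mem_union_left _ hc)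
  -- monotone domination (b)
  have hmono : ∀ ℓ ℓ', ℓ ≤ ℓ' → ∀ v, ∀ c ∈ D ℓ v, ∃ c' ∈ D ℓ' v, c' ≤ c := by
    intro ℓ ℓ' h
    induction ℓ' with
    | zero =>
      intro v c hc
      exact ⟨c, by simpa [Nat.le_zero.mp h] using hc, le_refl c⟩
    | succ ℓ'' ih =>
      intro v c hc
      rcases Nat.lt_or_ge ℓ (ℓ'' + 1) with h' | h'
      · obtain ⟨c1, hc1, hle1⟩ := ih (Nat.lt_succ_iff.mp h') v c hc
        obtain ⟨c2, hc2, hle2⟩ := hstep ℓ'' v c1 hc1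
        exact ⟨c2, hc2, hle2.trans hle1⟩
      · have : ℓ = ℓ'' + 1 := le_antisymm h h'
        exact ⟨c, this ▸ hc, le_refl c⟩
  intro ℓ ℓ' h v
  refine ⟨?_, hmono ℓ ℓ' h v⟩
  rintro c' hc' ⟨c, hc, hlt⟩
  obtain ⟨c'', hc'', hle⟩ := hmono ℓ ℓ' h v c hc
  have hlt' : c'' < c' := lt_of_le_of_lt hle hlt
  -- c'' and c' both in D ℓ' v : contradicts pareto minimality (ℓ' > 0) or D 0 structure
  cases ℓ' with
  | zero =>
    by_cases hv : v = s
    · subst hv; rw [hD0s] at hc' hc''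
      simp only [Set.mem_singleton_iff] at hc' hc''
      rw [hc', hc''] at hlt'; exact lt_irrefl _ hlt'
    · rw [hD0 v hv] at hc'; exact hc'
  | succ m =>
    rw [hDstep] at hc' hc''
    exact hc'.2 ⟨c'', hc''.1, hlt'⟩
end
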